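/- Let A be a closed subset of ℝ², and let x, y ∈ ℝ² ∖ A lie in different connected components of ℝ² ∖ A. Let U be the connected component of ℝ² ∖ A containing x. Then y does not belong to the closure of U; and if V denotes the connected component of ℝ² ∖ closure(U) containing y, then the frontier Fr V is a connected subset of A, and x and y lie in different connected components of ℝ² ∖ Fr V. -/

import Mathlib

open Set Complex

noncomputable section

lemma mem_slitPlane_of_close {w : ℂ} (h : ‖w - 1‖ < 1) : w ∈ Complex.slitPlane := by
  rw [Complex.mem_slitPlane_iff]
  left
  have : |(w - 1).re| ≤ ‖w - 1‖ := Complex.abs_re_le_norm _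
  have : (w - 1).re > -1 := by
    have := neg_abs_le (w - 1).re
    linarith
  have hre : (w - 1).re = w.re - 1 := by simp [Complex.sub_re]
  linarith [hre ▸ this]

lemma exp_const_aux {X : Type*} [TopologicalSpace X] {s : Set X} (hs : IsPreconnected s)
    {d : X → ℂ} (hd : ContinuousOn d s) (h1 : ∀ z ∈ s, Complex.exp (d z) = 1)
    {a b : X} (ha : a ∈ s) (hb : b ∈ s) : d a = d b := by
  have key : ∀ z ∈ s, ∃ n : ℤ, d z = n * (2 * Real.pi * I) := by
    intro z hz
    exact Complex.exp_eq_one_iff.mp (h1 z hz)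
  obtain ⟨na, hna⟩ := key a ha
  obtain ⟨nb, hnb⟩ := key b hb
  have him : ∀ (n : ℤ), ((n : ℂ) * (2 * Real.pi * I)).im = n * (2 * Real.pi) := by
    intro n
    simp [Complex.mul_im]
  by_contra hne
  have hnanb : na ≠ nb := by rintro rfl; exact hne (hna.trans hnb.symm)
  -- wlog na < nb
  have main : ∀ (p q : X), p ∈ s → q ∈ s → ∀ (np nq : ℤ), d p = np * (2 * Real.pi * I) →
      d q = nq * (2 * Real.pi * I) → np < nq → False := by
    intro p q hp hq np nq hdp hdq hlt
    have hcont : ContinuousOn (fun z => (d z).im) s := Complex.continuous_im.comp_continuousOn hd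
    have hmem : (np * (2 * Real.pi) + Real.pi) ∈ Icc ((d p).im) ((d q).im) := by
      rw [hdp, hdq, him, him]
      constructor
      · nlinarith [Real.pi_pos]
      · have : (np : ℝ) + 1 ≤ nq := by exact_mod_cast hlt
        nlinarith [Real.pi_pos]
    obtain ⟨z, hz, hzval⟩ := hs.intermediate_value hp hq hcont hmem
    obtain ⟨nz, hnz⟩ := key z hz
    have hzval' : (d z).im = (np : ℝ) * (2 * Real.pi) + Real.pi := hzval
    rw [hnz, him] at hzval'
    have : (2 * nz : ℝ) = 2 * np + 1 := by
      have hfac : ((2 * nz : ℝ) - (2 * np + 1)) * Real.pi = 0 := by ring_nf; linarith [hzval']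
      rcases mul_eq_zero.mp hfac with h' | h'
      · linarith
      · exact absurd h' Real.pi_ne_zero
    have : (2 * nz : ℤ) = 2 * np + 1 := by exact_mod_cast this
    omega
  rcases lt_or_gt_of_ne hnanb with h | h
  · exact main a b ha hb na nb hna hnb h
  · exact main b a hb ha nb na hnb hna h

lemma lift_Icc {γ : ℝ → ℂ} (hγ : Continuous γ) (h0 : ∀ t, γ t ≠ 0) {a b : ℝ} (hab : a < b) :
    ∃ h : ℝ → ℂ, ContinuousOn h (Icc a b) ∧ ∀ t ∈ Icc a b, Complex.exp (h t) = γ t := by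
  -- minimum of ‖γ‖ on [a,b]
  obtain ⟨p, hp, hpmin'⟩ := isCompact_Icc.exists_isMinOn (nonempty_Icc.2 hab.le)
    (hγ.norm.continuousOn (s := Icc a b))
  have hpmin : ∀ q ∈ Icc a b, ‖γ p‖ ≤ ‖γ q‖ := fun q hq => hpmin' hq
  set m := ‖γ p‖ with hm
  have hmpos : 0 < m := norm_pos_iff.2 (h0 p)
  -- uniform continuity
  have huc : UniformContinuousOn γ (Icc a b) :=
    isCompact_Icc.uniformContinuousOn_of_continuous hγ.continuousOn
  obtain ⟨δ, hδpos, hδ⟩ := Metric.uniformContinuousOn_iff.mp huc m hmpos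
  -- subdivision
  obtain ⟨n, hn⟩ := exists_nat_gt ((b - a) / δ)
  set N := n + 1 with hN
  have hNpos : (0:ℝ) < N := by exact_mod_cast Nat.succ_pos n
  set ε := (b - a) / N with hε
  have hεpos : 0 < ε := div_pos (by linarith) hNpos
  have hεδ : ε < δ := by
    rw [hε, div_lt_iff₀ hNpos]
    have h1 : b - a < n * δ := by
      have := (div_lt_iff₀ hδpos).mp hn
      linarith
    have h2 : (n : ℝ) ≤ N := by exact_mod_cast Nat.le_succ n
    nlinarith [hδpos]
  set ρ : ℕ → ℝ → ℂ := fun j t => γ (min t (a + (j+1) * ε)) / γ (min t (a + j * ε)) with hρ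
  -- points stay in [a,b] and are δ-close
  have hpts : ∀ j : ℕ, ∀ t ∈ Icc a b, min t (a + j * ε) ∈ Icc a b ∧
      min t (a + (j+1) * ε) ∈ Icc a b ∧
      min t (a + j * ε) ≤ min t (a + (j+1) * ε) ∧
      min t (a + (j+1) * ε) - min t (a + j * ε) ≤ ε := by
    intro j t ht
    have hja : a ≤ a + j * ε := by nlinarith [hεpos, Nat.cast_nonneg (α := ℝ) j]
    have hja' : a ≤ a + (j+1) * ε := by nlinarith [hεpos, Nat.cast_nonneg (α := ℝ) j]
    have hmono : a + (j:ℝ) * ε ≤ a + (j+1) * ε := by nlinarith [hεpos]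
    refine ⟨⟨le_min ht.1 hja, min_le_of_left_le ht.2⟩,
      ⟨le_min ht.1 hja', min_le_of_left_le ht.2⟩, min_le_min le_rfl hmono, ?_⟩
    rcases le_total t (a + j * ε) with h' | h'
    · rw [min_eq_left h', min_eq_left (h'.trans hmono)]; linarith
    · rw [min_eq_right h']
      have : min t (a + (j+1) * ε) ≤ a + (j+1) * ε := min_le_right _ _
      linarith
  have hclose : ∀ j : ℕ, ∀ t ∈ Icc a b, ‖ρ j t - 1‖ < 1 := by
    intro j t ht
    obtain ⟨h1, h2, h3, h4⟩ := hpts j t ht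
    set p1 := min t (a + j * ε)
    set p2 := min t (a + (j+1) * ε)
    have hd : dist (γ p2) (γ p1) < m := by
      apply hδ p2 h2 p1 h1
      rw [Real.dist_eq, _root_.abs_of_nonneg (by linarith : (0:ℝ) ≤ p2 - p1)]
      linarith
    have hnm : m ≤ ‖γ p1‖ := hpmin p1 h1
    have : ρ j t - 1 = (γ p2 - γ p1) / γ p1 := by
      show γ p2 / γ p1 - 1 = _
      rw [div_sub_one (h0 p1)]
    rw [this, norm_div]
    rw [div_lt_one (norm_pos_iff.2 (h0 p1))]
    calc ‖γ p2 - γ p1‖ = dist (γ p2) (γ p1) := (dist_eq_norm _ _).symm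
    _ < m := hd
    _ ≤ ‖γ p1‖ := hnm
  have hρcont : ∀ j : ℕ, Continuous (ρ j) := by
    intro j
    exact (hγ.comp (continuous_id.min continuous_const)).div
      (hγ.comp (continuous_id.min continuous_const)) (fun t => h0 _)
  have hρne : ∀ j t, ρ j t ≠ 0 := fun j t => div_ne_zero (h0 _) (h0 _)
  refine ⟨fun t => Complex.log (γ a) + ∑ j ∈ Finset.range N, Complex.log (ρ j t), ?_, ?_⟩
  · apply ContinuousOn.add continuousOn_const
    apply continuousOn_finset_sum
    intro j hj
    intro t ht
    exact ((continuousAt_clog (mem_slitPlane_of_close (hclose j t ht))).comp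
      (hρcont j).continuousAt).continuousWithinAt
  · intro t ht
    have htel : ∀ k : ℕ, ∏ j ∈ Finset.range k, ρ j t = γ (min t (a + k * ε)) / γ (min t a) := by
      intro k
      induction k with
      | zero => simpa using (div_self (h0 (min t a))).symm
      | succ k ih =>
        rw [Finset.prod_range_succ, ih]
        show _ * (γ (t ⊓ (a + ((k:ℝ)+1) * ε)) / γ (t ⊓ (a + (k:ℝ) * ε))) = _
        have hcast : ((k+1 : ℕ) : ℝ) = (k:ℝ)+1 := by push_cast; ring
        rw [hcast]
        field_simp [h0]
    rw [Complex.exp_add, Complex.exp_sum]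
    have hprod : ∀ j ∈ Finset.range N, Complex.exp (Complex.log (ρ j t)) = ρ j t :=
      fun j _ => Complex.exp_log (hρne j t)
    rw [Finset.prod_congr rfl hprod, htel N, Complex.exp_log (h0 a)]
    have hNb : a + N * ε = b := by
      rw [hε]; field_simp; ring
    rw [hNb, min_eq_left ht.2, min_eq_right ht.1]
    rw [mul_div_assoc']
    rw [mul_comm, mul_div_assoc, div_self (h0 a), mul_one]

lemma lift_line {γ : ℝ → ℂ} (hγ : Continuous γ) (h0 : ∀ t, γ t ≠ 0) :
    ∃ h : ℝ → ℂ, Continuous h ∧ (∀ t, Complex.exp (h t) = γ t) ∧ h 0 = Complex.log (γ 0) := by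
  have hIcc : ∀ n : ℕ, (-((n:ℝ)+1)) < ((n:ℝ)+1) := by
    intro n
    have : (0:ℝ) < (n:ℝ) + 1 := by positivity
    linarith
  have hmem0 : ∀ n : ℕ, (0:ℝ) ∈ Icc (-((n:ℝ)+1)) ((n:ℝ)+1) := by
    intro n
    have : (0:ℝ) ≤ (n:ℝ) + 1 := by positivity
    exact ⟨by linarith, by linarith⟩
  choose h hcont hexp using fun n : ℕ => lift_Icc hγ h0 (hIcc n)
  set H : ℕ → ℝ → ℂ := fun n t => h n t - h n 0 + Complex.log (γ 0) with hH
  have hHcont : ∀ n : ℕ, ContinuousOn (H n) (Icc (-((n:ℝ)+1)) ((n:ℝ)+1)) := by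
    intro n
    exact ((hcont n).sub continuousOn_const).add continuousOn_const
  have hHexp : ∀ n : ℕ, ∀ t ∈ Icc (-((n:ℝ)+1)) ((n:ℝ)+1), Complex.exp (H n t) = γ t := by
    intro n t ht
    rw [hH]
    simp only
    rw [Complex.exp_add, Complex.exp_sub, hexp n t ht, hexp n 0 (hmem0 n),
      Complex.exp_log (h0 0)]
    field_simp [h0]
  have hH0 : ∀ n : ℕ, H n 0 = Complex.log (γ 0) := by intro n; rw [hH]; simp
  -- uniqueness of lifts
  have huniq : ∀ m n : ℕ, ∀ t : ℝ, |t| ≤ (m:ℝ)+1 → |t| ≤ (n:ℝ)+1 → H m t = H n t := by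
    intro m n t hm hn
    set c := min m n with hc
    have hcm : (c:ℝ) ≤ m := by exact_mod_cast min_le_left m n
    have hcn : (c:ℝ) ≤ n := by exact_mod_cast min_le_right m n
    have htc : |t| ≤ (c:ℝ)+1 := by
      rcases le_total (m:ℕ) n with h' | h'
      · rw [hc, min_eq_left h']; exact hm
      · rw [hc, min_eq_right h']; exact hn
    have hsub : Icc (-((c:ℝ)+1)) ((c:ℝ)+1) ⊆ Icc (-((m:ℝ)+1)) ((m:ℝ)+1) :=
      Icc_subset_Icc (by linarith) (by linarith)
    have hsub' : Icc (-((c:ℝ)+1)) ((c:ℝ)+1) ⊆ Icc (-((n:ℝ)+1)) ((n:ℝ)+1) :=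
      Icc_subset_Icc (by linarith) (by linarith)
    have hd : ∀ z ∈ Icc (-((c:ℝ)+1)) ((c:ℝ)+1), Complex.exp (H m z - H n z) = 1 := by
      intro z hz
      rw [Complex.exp_sub, hHexp m z (hsub hz), hHexp n z (hsub' hz), div_self (h0 z)]
    have htmem : t ∈ Icc (-((c:ℝ)+1)) ((c:ℝ)+1) := by
      rw [mem_Icc]
      constructor
      · linarith [neg_abs_le t]
      · linarith [le_abs_self t]
    have heq := exp_const_aux (isPreconnected_Icc)
      (((hHcont m).mono hsub).sub ((hHcont n).mono hsub'))
      hd htmem (hmem0 c)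
    have h2 : H m 0 - H n 0 = 0 := by rw [hH0 m, hH0 n]; ring
    exact sub_eq_zero.mp (heq.trans h2)
  -- glue
  refine ⟨fun t => H (⌊|t|⌋₊) t, ?_, ?_, ?_⟩
  · rw [continuous_iff_continuousAt]
    intro t₀
    set n := ⌊|t₀|⌋₊ + 1 with hn
    have ht₀ : |t₀| < (n:ℝ) := by
      rw [hn]
      push_cast
      linarith [Nat.lt_floor_add_one |t₀|]
    have hIoo : t₀ ∈ Ioo (-((n:ℝ)+1)) ((n:ℝ)+1) := by
      constructor
      · linarith [neg_abs_le t₀]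
      · linarith [le_abs_self t₀]
    have hagree : ∀ t ∈ Ioo (-((n:ℝ)+1)) ((n:ℝ)+1), H (⌊|t|⌋₊) t = H n t := by
      intro t ht
      apply huniq
      · linarith [Nat.lt_floor_add_one |t|, Nat.floor_le (abs_nonneg t)]
      · rcases abs_le.mpr ⟨ht.1.le, ht.2.le⟩ with h'
        exact h'
    have hCA : ContinuousAt (H n) t₀ := by
      apply (hHcont n).continuousAt
      exact Icc_mem_nhds hIoo.1 hIoo.2
    apply hCA.congr
    apply Filter.eventuallyEq_of_mem (Ioo_mem_nhds hIoo.1 hIoo.2)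
    intro t ht
    exact (hagree t ht).symm
  · intro t
    apply hHexp
    rw [mem_Icc]
    constructor
    · linarith [neg_abs_le t, Nat.lt_floor_add_one |t|]
    · linarith [le_abs_self t, Nat.lt_floor_add_one |t|]
  · simp only [abs_zero, Nat.floor_zero]
    exact hH0 0
lemma lift_plane {f : ℝ × ℝ → ℂ} (hf : Continuous f) (h0 : ∀ z, f z ≠ 0) :
    ∃ g : ℝ × ℝ → ℂ, Continuous g ∧ ∀ z, Complex.exp (g z) = f z := by
  -- lift along the horizontal axis
  obtain ⟨L, hLcont, hLexp, -⟩ := lift_line (γ := fun s => f (s, 0))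
    (hf.comp (continuous_id.prodMk continuous_const)) (fun s => h0 _)
  -- lift along each vertical line
  choose H hHcont hHexp hH0 using fun s : ℝ => lift_line (γ := fun t => f (s, t))
    (hf.comp (continuous_const.prodMk continuous_id)) (fun t => h0 _)
  set g : ℝ × ℝ → ℂ := fun z => H z.1 z.2 + (L z.1 - Complex.log (f (z.1, 0))) with hg
  have hgexp : ∀ z, Complex.exp (g z) = f z := by
    intro z
    rw [hg]
    simp only
    rw [Complex.exp_add, Complex.exp_sub, hHexp z.1 z.2, hLexp z.1,
      Complex.exp_log (h0 (z.1, 0))]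
    field_simp [h0]
  have hg0 : ∀ s, g (s, 0) = L s := by
    intro s
    rw [hg]
    simp only
    rw [hH0 s]
    ring
  refine ⟨g, ?_, hgexp⟩
  rw [continuous_iff_continuousAt]
  rintro ⟨s₀, t₀⟩
  set T := |t₀| + 1 with hT
  have hTpos : (0:ℝ) < T := by positivity
  have ht₀T : |t₀| < T := by rw [hT]; linarith
  -- the tube
  set q : ℝ × ℝ → ℝ := fun z => ‖f z / f (s₀, z.2) - 1‖ with hq
  have hqcont : Continuous q := ((hf.div (hf.comp (continuous_const.prodMk continuous_snd))
      (fun z => h0 _)).sub continuous_const).norm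
  have hqsub : {s₀} ×ˢ Icc (-T) T ⊆ q ⁻¹' Iio 1 := by
    rintro ⟨s, t⟩ ⟨hs, ht⟩
    simp only [mem_singleton_iff] at hs
    subst hs
    simp only [mem_preimage, mem_Iio, hq]
    rw [div_self (h0 _)]
    simp
  obtain ⟨u, v, huo, hvo, hs₀u, hJv, huv⟩ := generalized_tube_lemma isCompact_singleton
    isCompact_Icc (isOpen_Iio.preimage hqcont) hqsub
  have hratio : ∀ z : ℝ × ℝ, z.1 ∈ u → z.2 ∈ Icc (-T) T → ‖f z / f (s₀, z.2) - 1‖ < 1 := by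
    intro z hz1 hz2
    have : z ∈ q ⁻¹' Iio 1 := huv ⟨hz1, hJv hz2⟩
    simpa [hq] using this
  set W := u ×ˢ Ioo (-T) T with hW
  have hWo : IsOpen W := huo.prod isOpen_Ioo
  have hWmem : (s₀, t₀) ∈ W := ⟨hs₀u rfl, by constructor <;> [linarith [neg_abs_le t₀]; linarith [le_abs_self t₀]]⟩
  have h0J : (0:ℝ) ∈ Icc (-T) T := ⟨by linarith, by linarith⟩
  -- the comparison identity
  set RHS : ℝ × ℝ → ℂ := fun z => g (s₀, z.2) + Complex.log (f z / f (s₀, z.2)) +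
    (L z.1 - L s₀ - Complex.log (f (z.1, 0) / f (s₀, 0))) with hRHS
  have hEq : EqOn g RHS W := by
    rintro ⟨s, t⟩ ⟨hsu, htIoo⟩
    have htJ : t ∈ Icc (-T) T := ⟨htIoo.1.le, htIoo.2.le⟩
    set d : ℝ → ℂ := fun t => g (s, t) - g (s₀, t) - Complex.log (f (s, t) / f (s₀, t)) with hd
    have hgscont : ∀ s' : ℝ, Continuous (fun t => g (s', t)) := by
      intro s'
      rw [hg]
      simp only
      exact (hHcont s').add continuous_const
    have hdcont : ContinuousOn d (Icc (-T) T) := by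
      apply ContinuousOn.sub
      · exact ((hgscont s).comp continuous_id).continuousOn.sub
          ((hgscont s₀).comp continuous_id).continuousOn
      · intro t' ht'
        have hr : ‖f (s, t') / f (s₀, t') - 1‖ < 1 := hratio (s, t') hsu ht'
        have hc1 : ContinuousAt (fun t' : ℝ => f (s, t') / f (s₀, t')) t' := by
          apply ContinuousAt.div
          · exact (hf.comp (continuous_const.prodMk continuous_id)).continuousAt
          · exact (hf.comp (continuous_const.prodMk continuous_id)).continuousAt
          · exact h0 _
        exact (hc1.clog (mem_slitPlane_of_close hr)).continuousWithinAt
    have hdone : ∀ t' ∈ Icc (-T) T, Complex.exp (d t') = 1 := by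
      intro t' ht'
      rw [hd]
      simp only
      rw [Complex.exp_sub, Complex.exp_sub, hgexp (s, t'), hgexp (s₀, t'),
        Complex.exp_log (div_ne_zero (h0 _) (h0 _))]
      exact div_self (div_ne_zero (h0 _) (h0 _))
    have hconst := exp_const_aux isPreconnected_Icc hdcont hdone htJ h0J
    have hd0 : d 0 = L s - L s₀ - Complex.log (f (s, 0) / f (s₀, 0)) := by
      rw [hd]
      simp only
      rw [hg0 s, hg0 s₀]
    have hdt : d t = g (s, t) - g (s₀, t) - Complex.log (f (s, t) / f (s₀, t)) := rfl
    rw [hdt, hd0] at hconst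
    have : g (s, t) = g (s₀, t) + Complex.log (f (s, t) / f (s₀, t)) +
        (L s - L s₀ - Complex.log (f (s, 0) / f (s₀, 0))) := by
      linear_combination hconst
    exact this
  have hRHScont : ContinuousOn RHS W := by
    apply ContinuousOn.add
    apply ContinuousOn.add
    · have : Continuous (fun x : ℝ × ℝ => g (s₀, x.2)) := by
        rw [hg]
        simp only
        exact ((hHcont s₀).comp continuous_snd).add continuous_const
      exact this.continuousOn
    · rintro ⟨s, t⟩ ⟨hsu, htIoo⟩
      have hr : ‖f (s, t) / f (s₀, t) - 1‖ < 1 := hratio (s, t) hsu ⟨htIoo.1.le, htIoo.2.le⟩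
      have hc1 : ContinuousAt (fun z : ℝ × ℝ => f z / f (s₀, z.2)) (s, t) := by
        apply ContinuousAt.div
        · exact hf.continuousAt
        · exact (hf.comp (continuous_const.prodMk continuous_snd)).continuousAt
        · exact h0 _
      exact (hc1.clog (mem_slitPlane_of_close hr)).continuousWithinAt
    · apply ContinuousOn.sub
      · exact ((hLcont.comp continuous_fst).sub continuous_const).continuousOn
      · rintro ⟨s, t⟩ ⟨hsu, htIoo⟩
        have hr : ‖f (s, 0) / f (s₀, 0) - 1‖ < 1 := hratio (s, 0) hsu h0J
        have hc1 : ContinuousAt (fun z : ℝ × ℝ => f (z.1, 0) / f (s₀, 0)) (s, t) := by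
          apply ContinuousAt.div
          · exact (hf.comp ((continuous_fst).prodMk continuous_const)).continuousAt
          · exact continuousAt_const
          · exact h0 _
        exact (hc1.clog (mem_slitPlane_of_close hr)).continuousWithinAt
  have hCA : ContinuousAt RHS (s₀, t₀) := hRHScont.continuousAt (hWo.mem_nhds hWmem)
  apply hCA.congr
  apply Filter.eventuallyEq_of_mem (hWo.mem_nhds hWmem)
  intro z hz
  exact (hEq hz).symm

lemma unicoherent_plane {K L : Set (ℝ × ℝ)} (hK : IsClosed K) (hL : IsClosed L)
    (hKc : IsPreconnected K) (hLc : IsPreconnected L) (hKL : K ∪ L = univ) :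
    IsPreconnected (K ∩ L) := by
  classical
  by_contra hnc
  rw [isPreconnected_iff_subset_of_fully_disjoint_closed (hK.inter hL)] at hnc
  push_neg at hnc
  obtain ⟨u', v', hu', hv', hsub, hdisj, hnu, hnv⟩ := hnc
  set F1 := (K ∩ L) ∩ u' with hF1
  set F2 := (K ∩ L) ∩ v' with hF2
  have hF1c : IsClosed F1 := (hK.inter hL).inter hu'
  have hF2c : IsClosed F2 := (hK.inter hL).inter hv'
  have hF12 : K ∩ L = F1 ∪ F2 := by
    apply Subset.antisymm
    · intro z hz
      rcases hsub hz with h | h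
      · exact Or.inl ⟨hz, h⟩
      · exact Or.inr ⟨hz, h⟩
    · rintro z (⟨hz, -⟩ | ⟨hz, -⟩) <;> exact hz
  have hdisjF : Disjoint F1 F2 := by
    apply Disjoint.mono (inter_subset_right) (inter_subset_right) hdisj
  have hF1ne : F1.Nonempty := by
    rcases not_subset.mp hnv with ⟨z, hz, hzv⟩
    rcases hsub hz with h | h
    · exact ⟨z, hz, h⟩
    · exact absurd h hzv
  have hF2ne : F2.Nonempty := by
    rcases not_subset.mp hnu with ⟨z, hz, hzu⟩
    rcases hsub hz with h | h
    · exact absurd h hzu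
    · exact ⟨z, hz, h⟩
  -- Urysohn
  obtain ⟨w, hw0, hw1, hw01⟩ := exists_continuous_zero_one_of_isClosed hF1c hF2c hdisjF
  -- the circle-valued map
  set f : ℝ × ℝ → ℂ := K.piecewise (fun z => Complex.exp (Real.pi * w z * Complex.I))
    (fun z => Complex.exp (-(Real.pi * w z) * Complex.I)) with hf
  have hKLmem : ∀ z, z ∉ K → z ∈ L := by
    intro z hz
    have hzu : z ∈ K ∪ L := hKL ▸ mem_univ z
    exact hzu.resolve_left hz
  have hfrK : frontier K ⊆ K ∩ L := by
    intro z hz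
    refine ⟨hK.frontier_subset hz, ?_⟩
    have h1 : z ∈ closure Kᶜ := by
      rw [frontier_eq_closure_inter_closure] at hz
      exact hz.2
    have h2 : closure Kᶜ ⊆ closure L := closure_mono (fun z hz => hKLmem z hz)
    rw [hL.closure_eq] at h2
    exact h2 h1
  have hfcont : Continuous f := by
    apply Continuous.piecewise
    · intro z hz
      have hzKL : z ∈ K ∩ L := hfrK hz
      rw [hF12] at hzKL
      rcases hzKL with h | h
      · rw [hw0 h]
        norm_num
      · have h1 : ((w z : ℝ) : ℂ) = 1 := by rw [hw1 h]; norm_num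
        rw [h1, mul_one, neg_mul, Complex.exp_neg, Complex.exp_pi_mul_I]
        norm_num
    · exact Complex.continuous_exp.comp
        ((continuous_const.mul (Complex.continuous_ofReal.comp w.continuous)).mul continuous_const)
    · exact Complex.continuous_exp.comp
        (((continuous_const.mul (Complex.continuous_ofReal.comp w.continuous)).neg).mul continuous_const)
  have hfne : ∀ z, f z ≠ 0 := by
    intro z
    rw [hf]
    by_cases hzK : z ∈ K
    · rw [Set.piecewise_eq_of_mem _ _ _ hzK]; exact Complex.exp_ne_zero _
    · rw [Set.piecewise_eq_of_notMem _ _ _ hzK]; exact Complex.exp_ne_zero _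
  obtain ⟨g, hgcont, hgexp⟩ := lift_plane hfcont hfne
  obtain ⟨z1, hz1⟩ := hF1ne
  obtain ⟨z2, hz2⟩ := hF2ne
  have hz1KL : z1 ∈ K ∩ L := hF12 ▸ Or.inl hz1
  have hz2KL : z2 ∈ K ∩ L := hF12 ▸ Or.inr hz2
  have hwz1 : w z1 = 0 := hw0 hz1
  have hwz2 : w z2 = 1 := hw1 hz2
  -- constancy on K
  have hdK := exp_const_aux hKc (d := fun z => g z - Real.pi * w z * Complex.I)
    (hgcont.continuousOn.sub
      ((continuous_const.mul (Complex.continuous_ofReal.comp w.continuous)).mul continuous_const).continuousOn)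
    (by
      intro z hz
      rw [Complex.exp_sub, hgexp z, hf, Set.piecewise_eq_of_mem _ _ _ hz,
        div_self (Complex.exp_ne_zero _)])
    hz1KL.1 hz2KL.1
  -- constancy on L
  have hdL := exp_const_aux hLc (d := fun z => g z + Real.pi * w z * Complex.I)
    (hgcont.continuousOn.add
      ((continuous_const.mul (Complex.continuous_ofReal.comp w.continuous)).mul continuous_const).continuousOn)
    (by
      intro z hz
      rw [Complex.exp_add, hgexp z, hf]
      by_cases hzK : z ∈ K
      · rw [Set.piecewise_eq_of_mem _ _ _ hzK]
        rw [← Complex.exp_add]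
        have hzKL : z ∈ K ∩ L := ⟨hzK, hz⟩
        rw [hF12] at hzKL
        rcases hzKL with h | h
        · have h1 : ((w z : ℝ) : ℂ) = 0 := by rw [hw0 h]; norm_num
          rw [h1]
          norm_num
        · have h1 : ((w z : ℝ) : ℂ) = 1 := by rw [hw1 h]; norm_num
          rw [h1, mul_one]
          have h2 : (Real.pi : ℂ) * Complex.I + Real.pi * Complex.I = 2 * Real.pi * Complex.I := by ring
          rw [h2, Complex.exp_two_pi_mul_I]
      · rw [Set.piecewise_eq_of_notMem _ _ _ hzK]
        rw [← Complex.exp_add]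
        have : -(Real.pi * w z) * Complex.I + Real.pi * w z * Complex.I = 0 := by ring
        rw [this, Complex.exp_zero])
    hz1KL.2 hz2KL.2
  simp only [hwz1, hwz2] at hdK hdL
  push_cast at hdK hdL
  have hcontr : (Real.pi : ℂ) * Complex.I = 0 := by linear_combination (hdK - hdL) / 2
  rcases mul_eq_zero.mp hcontr with h | h
  · exact Real.pi_ne_zero (by exact_mod_cast h)
  · exact Complex.I_ne_zero h

lemma closure_component_inter {X : Type*} [TopologicalSpace X] {s : Set X} {x : X} :
    closure (connectedComponentIn s x) ∩ s = connectedComponentIn s x := by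
  by_cases hx : x ∈ s
  · apply Subset.antisymm
    · apply IsPreconnected.subset_connectedComponentIn
      · exact isPreconnected_connectedComponentIn.subset_closure
          (subset_inter subset_closure (connectedComponentIn_subset s x))
          (inter_subset_left)
      · exact ⟨subset_closure (mem_connectedComponentIn hx), hx⟩
      · exact inter_subset_right
    · exact subset_inter subset_closure (connectedComponentIn_subset s x)
  · rw [connectedComponentIn_eq_empty hx]
    simp

lemma brouwer_property {C : Set (ℝ × ℝ)} (hC : IsClosed C) (hCc : IsPreconnected C)
    (hCne : C.Nonempty) {y : ℝ × ℝ} (hy : y ∈ Cᶜ) :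
    IsConnected (frontier (connectedComponentIn Cᶜ y)) ∧
      frontier (connectedComponentIn Cᶜ y) ⊆ C := by
  set V := connectedComponentIn Cᶜ y with hV
  have hVopen : IsOpen V := hC.isOpen_compl.connectedComponentIn
  have hVne : V.Nonempty := ⟨y, mem_connectedComponentIn hy⟩
  have hVsub : V ⊆ Cᶜ := connectedComponentIn_subset _ _
  have hVnuniv : V ≠ univ := by
    intro h
    obtain ⟨c, hc⟩ := hCne
    have : c ∈ Cᶜ := hVsub (h ▸ mem_univ c)
    exact this hc
  have hfr : frontier V = closure V ∩ Vᶜ := by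
    rw [hVopen.frontier_eq, diff_eq]
  have hfrC : frontier V ⊆ C := by
    rw [hfr]
    intro z ⟨hz1, hz2⟩
    by_contra hzC
    have : z ∈ closure V ∩ Cᶜ := ⟨hz1, hzC⟩
    rw [hV, closure_component_inter] at this
    exact hz2 this
  -- K and L
  have hKc : IsPreconnected (closure V) := isPreconnected_connectedComponentIn.closure
  have hCL : C ⊆ Vᶜ := fun c hc hcV => hVsub hcV hc
  have hLc : IsPreconnected Vᶜ := by
    obtain ⟨x₀, hx₀⟩ := hCne
    have hTz : ∀ z : ℝ × ℝ, IsPreconnected (C ∪ closure (connectedComponentIn Cᶜ z)) := by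
      intro z
      by_cases hzC : z ∈ Cᶜ
      · have hWne : (connectedComponentIn Cᶜ z).Nonempty := ⟨z, mem_connectedComponentIn hzC⟩
        have hWnuniv : connectedComponentIn Cᶜ z ≠ univ := by
          intro h
          exact (connectedComponentIn_subset Cᶜ z (h ▸ mem_univ x₀)) hx₀
        have hfrW : (frontier (connectedComponentIn Cᶜ z)).Nonempty :=
          nonempty_frontier_iff.mpr ⟨hWne, hWnuniv⟩
        obtain ⟨p, hp⟩ := hfrW
        have hpC : p ∈ C := by
          have hWopen : IsOpen (connectedComponentIn Cᶜ z) := hC.isOpen_compl.connectedComponentIn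
          rw [hWopen.frontier_eq, diff_eq] at hp
          by_contra hpC
          have : p ∈ closure (connectedComponentIn Cᶜ z) ∩ Cᶜ := ⟨hp.1, hpC⟩
          rw [closure_component_inter] at this
          exact hp.2 this
        have hpcl : p ∈ closure (connectedComponentIn Cᶜ z) := frontier_subset_closure hp
        exact hCc.union p hpC hpcl isPreconnected_connectedComponentIn.closure
      · have : connectedComponentIn Cᶜ z = ∅ := connectedComponentIn_eq_empty hzC
        rw [this, closure_empty, union_empty]
        exact hCc
    have hTsub : ∀ z ∈ Vᶜ, C ∪ closure (connectedComponentIn Cᶜ z) ⊆ Vᶜ := by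
      intro z hz
      apply union_subset hCL
      by_cases hzC : z ∈ Cᶜ
      · intro p hp
        have hp' : p ∈ connectedComponentIn Cᶜ z ∪ C := by
          rcases (em (p ∈ C)) with h | h
          · exact Or.inr h
          · left
            have : p ∈ closure (connectedComponentIn Cᶜ z) ∩ Cᶜ := ⟨hp, h⟩
            rw [closure_component_inter] at this
            exact this
        rcases hp' with h | h
        · -- p in component of z; if p ∈ V then components equal, z ∈ V, contradiction
          intro hpV
          have he : connectedComponentIn Cᶜ z = connectedComponentIn Cᶜ p :=
            connectedComponentIn_eq h
          have he2 : connectedComponentIn Cᶜ y = connectedComponentIn Cᶜ p :=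
            connectedComponentIn_eq hpV
          have : z ∈ V := by
            rw [hV, he2, ← he]
            exact mem_connectedComponentIn hzC
          exact hz this
        · exact hCL h
      · rw [connectedComponentIn_eq_empty hzC, closure_empty]
        exact empty_subset _
    have hunion : Vᶜ = ⋃₀ ((fun z => C ∪ closure (connectedComponentIn Cᶜ z)) '' Vᶜ) := by
      apply Subset.antisymm
      · intro z hz
        refine mem_sUnion.mpr ⟨_, mem_image_of_mem _ hz, ?_⟩
        by_cases hzC : z ∈ Cᶜ
        · exact Or.inr (subset_closure (mem_connectedComponentIn hzC))
        · exact Or.inl (not_not.mp fun h => hzC h)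
      · intro z hz
        rcases mem_sUnion.mp hz with ⟨S, hS, hzS⟩
        rcases (mem_image ..).mp hS with ⟨z', hz', rfl⟩
        exact hTsub z' hz' hzS
    rw [hunion]
    apply isPreconnected_sUnion x₀
    · rintro S hS
      rcases (mem_image ..).mp hS with ⟨z', hz', rfl⟩
      exact Or.inl hx₀
    · rintro S hS
      rcases (mem_image ..).mp hS with ⟨z', hz', rfl⟩
      exact hTz z'
  have hfrne : (frontier V).Nonempty := nonempty_frontier_iff.mpr ⟨hVne, hVnuniv⟩
  have huni := unicoherent_plane isClosed_closure (isClosed_compl_iff.mpr hVopen)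
    hKc hLc (by
      apply eq_univ_of_univ_subset
      intro z _
      rcases em (z ∈ V) with h | h
      · exact Or.inl (subset_closure h)
      · exact Or.inr h)
  rw [← hfr] at huni
  exact ⟨⟨hfrne, huni⟩, hfrC⟩


/-- refined claim in the proof of Lemma 2.5. Let `A ⊆ ℝ²` be closed and let
`x, y ∉ A` lie in different connected components of `Aᶜ`. Let `U` be the component of `Aᶜ`
containing `x`, and `V` the component of `(closure U)ᶜ` containing `y`. Then `y ∉ closure U`,
the frontier of `V` is a connected subset of `A`, and `x` and `y` lie in different connected
components of the complement of `frontier V`. -/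
theorem stmt_1 (A : Set (ℝ × ℝ)) (hA : IsClosed A) (x y : ℝ × ℝ)
    (hx : x ∉ A) (hy : y ∉ A)
    (hsep : connectedComponentIn Aᶜ x ≠ connectedComponentIn Aᶜ y)
    (U V : Set (ℝ × ℝ))
    (hU : U = connectedComponentIn Aᶜ x)
    (hV : V = connectedComponentIn (closure U)ᶜ y) :
    y ∉ closure U ∧
    IsConnected (frontier V) ∧
    frontier V ⊆ A ∧
    x ∉ frontier V ∧ y ∉ frontier V ∧
    connectedComponentIn (frontier V)ᶜ x ≠ connectedComponentIn (frontier V)ᶜ y := by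
  have hxA : x ∈ Aᶜ := hx
  have hyA : y ∈ Aᶜ := hy
  have hxU : x ∈ U := hU ▸ mem_connectedComponentIn hxA
  have hyU : y ∉ U := by
    intro h
    exact hsep (connectedComponentIn_eq (hU ▸ h))
  have hycl : y ∉ closure U := by
    intro h
    have : y ∈ closure U ∩ Aᶜ := ⟨h, hyA⟩
    rw [hU, closure_component_inter] at this
    exact hyU (hU ▸ this)
  set C := closure U with hC
  have hCclosed : IsClosed C := isClosed_closure
  have hCc : IsPreconnected C := by
    rw [hC, hU]
    exact isPreconnected_connectedComponentIn.closure
  have hCne : C.Nonempty := ⟨x, subset_closure hxU⟩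
  have hyC : y ∈ Cᶜ := hycl
  obtain ⟨hfrconn, hfrC⟩ := brouwer_property hCclosed hCc hCne hyC
  rw [← hV] at hfrconn hfrC
  have hUopen : IsOpen U := hU ▸ hA.isOpen_compl.connectedComponentIn
  have hfrA : frontier V ⊆ A := by
    intro z hz
    by_contra hzA
    have hzC : z ∈ C := hfrC hz
    have hzU : z ∈ U := by
      have : z ∈ closure U ∩ Aᶜ := ⟨hzC, hzA⟩
      rw [hU, closure_component_inter] at this
      exact hU ▸ this
    -- z ∈ U open, z ∈ closure V, so U meets V; but V ⊆ Cᶜ ⊆ Uᶜ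
    have hzclV : z ∈ closure V := frontier_subset_closure hz
    rcases mem_closure_iff.mp hzclV U hUopen hzU with ⟨p, hpU, hpV⟩
    have hpC : p ∈ Cᶜ := connectedComponentIn_subset _ _ (hV ▸ hpV : p ∈ connectedComponentIn Cᶜ y)
    exact hpC (subset_closure hpU)
  have hxfr : x ∉ frontier V := fun h => hx (hfrA h)
  have hyfr : y ∉ frontier V := fun h => hy (hfrA h)
  refine ⟨hycl, hfrconn, hfrA, hxfr, hyfr, ?_⟩
  -- separation
  have hVopen : IsOpen V := hV ▸ hCclosed.isOpen_compl.connectedComponentIn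
  have hyV : y ∈ V := hV ▸ mem_connectedComponentIn hyC
  have hfr_eq : (frontier V)ᶜ = V ∪ (closure V)ᶜ := by
    rw [hVopen.frontier_eq, diff_eq, compl_inter, compl_compl]
    rw [union_comm]
  have hcc_sub : connectedComponentIn (frontier V)ᶜ y ⊆ V := by
    apply IsPreconnected.subset_left_of_subset_union hVopen
      (isClosed_closure (s := V)).isOpen_compl
    · exact disjoint_compl_right.mono_right (compl_subset_compl.mpr subset_closure)
    · rw [← hfr_eq]
      exact connectedComponentIn_subset _ _
    · exact ⟨y, mem_connectedComponentIn hyfr, hyV⟩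
    · exact isPreconnected_connectedComponentIn
  intro heq
  have hxcc : x ∈ connectedComponentIn (frontier V)ᶜ x := mem_connectedComponentIn hxfr
  rw [heq] at hxcc
  have hxV : x ∈ V := hcc_sub hxcc
  have hxC : x ∈ Cᶜ := connectedComponentIn_subset _ _ (hV ▸ hxV : x ∈ connectedComponentIn Cᶜ y)
  exact hxC (subset_closure hxU)
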